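/- For real s > 1, (1 + ∑_{p prime} p^(-s)) / ζ(s) ≤ 1 + (∑_{p prime} p^(-s))^2, where ζ is the Riemann zeta function. -/
import Mathlib

/-- For real `s > 1`, `(1 + P(s)) / ζ(s) ≤ 1 + P(s)^2`, where
`P(s) = ∑_{p prime} p^(-s)`. -/
theorem remainder_bound (s : ℝ) (hs : 1 < s) :
    (1 + ∑' p : Nat.Primes, (p : ℝ) ^ (-s)) / (riemannZeta s).re
      ≤ 1 + (∑' p : Nat.Primes, (p : ℝ) ^ (-s)) ^ 2 := by
  set f : ℕ → ℝ := fun n => (n : ℝ) ^ (-s) with hf_def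
  have hf : Summable f := Real.summable_nat_rpow.2 (by linarith)
  set P : ℝ := ∑' p : Nat.Primes, (p : ℝ) ^ (-s) with hP_def
  have hPnonneg : 0 ≤ P := tsum_nonneg fun p => Real.rpow_nonneg (Nat.cast_nonneg _) _
  -- ζ(s).re = ∑' n, f n
  have hzeta : (riemannZeta s).re = ∑' n : ℕ, f n := by
    have h1 : (1 : ℝ) < (s : ℂ).re := by simpa using hs
    rw [zeta_eq_tsum_one_div_nat_cpow h1]
    have hterm : ∀ n : ℕ, (1 : ℂ) / (n : ℂ) ^ (s : ℂ) = ((f n : ℝ) : ℂ) := by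
      intro n
      simp only [hf_def, Real.rpow_neg (Nat.cast_nonneg n), Complex.ofReal_inv,
        Complex.ofReal_cpow (Nat.cast_nonneg n), Complex.ofReal_natCast, one_div]
    simp only [hterm]
    rw [← Complex.ofReal_tsum]
    simp
  -- 1 + P ≤ ∑' n, f n
  have hkey : 1 + P ≤ ∑' n : ℕ, f n := by
    have hP : P = ∑' n : ℕ, Set.indicator {n : ℕ | n.Prime} f n := by
      rw [hP_def, ← tsum_subtype]
      rfl
    rw [Summable.tsum_eq_add_tsum_ite hf 1]
    have hf1 : f 1 = 1 := by simp [hf_def]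
    rw [hf1, hP]
    gcongr 1 + ?_
    refine Summable.tsum_le_tsum (fun n => ?_) ?_ ?_
    · by_cases hn : n ∈ {n : ℕ | n.Prime}
      · rw [Set.indicator_of_mem hn]
        have : n ≠ 1 := hn.one_lt.ne'
        simp [this]
      · rw [Set.indicator_of_notMem hn]
        positivity
    · exact hf.indicator _
    · exact hf.summable_of_eq_zero_or_self fun n => by
        by_cases h : n = 1 <;> simp [h]
  have hpos : 0 < (riemannZeta s).re := by
    rw [hzeta]; linarith
  calc (1 + P) / (riemannZeta s).re ≤ 1 := by
        rw [div_le_one hpos, hzeta]; exact hkey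
    _ ≤ 1 + P ^ 2 := by nlinarith
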